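/- Let P be the uniform probability measure on the chord {(x,−1/2) : −√3/2 ≤ x ≤ √3/2} of the unit circle in ℝ², and let the constraint be the unit circle. Then the set {(cos θ₁, sin θ₁), (cos θ₂, sin θ₂)} with θ₁ = 2π − 2·arctan(√3/2 + √7/2) and θ₂ = π + 2·arctan(√3/2 + √7/2) is an optimal set of two points, and the second constrained quantization error is V_2 = (3 − √7)/2. -/

import Mathlib

open MeasureTheory Real Set

noncomputable section

abbrev E2 : Type := EuclideanSpace ℝ (Fin 2)

/-- The point `(x, y)` of the Euclidean plane. -/
def cpt (x y : ℝ) : E2 := WithLp.toLp 2 ![x, y]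

/-- Distortion error of `P` with respect to the set `α`: `∫ min_{a ∈ α} ‖x - a‖² dP(x)`. -/
def cDistortion (P : Measure E2) (α : Set E2) : ℝ :=
  ∫ x, (⨅ a : α, dist x (a : E2) ^ 2) ∂P

/-- The `n`th constrained quantization error of `P` with constraint set `S`. -/
def cqError (P : Measure E2) (S : Set E2) (n : ℕ) : ℝ :=
  sInf {v : ℝ | ∃ α : Set E2, α ⊆ S ∧ α.Finite ∧ 1 ≤ α.ncard ∧ α.ncard ≤ n ∧
    v = cDistortion P α}

/-- `α` is an optimal set of `n` points for `P` with constraint `S`: it is an admissible set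
attaining the `n`th constrained quantization error. -/
def IsOptimalNSet (P : Measure E2) (S : Set E2) (n : ℕ) (α : Set E2) : Prop :=
  α ⊆ S ∧ α.Finite ∧ 1 ≤ α.ncard ∧ α.ncard ≤ n ∧ cDistortion P α = cqError P S n

/-- The uniform probability distribution on the interval `[a, b]`. -/
def uniformIccM (a b : ℝ) : Measure ℝ :=
  (ENNReal.ofReal (b - a))⁻¹ • volume.restrict (Icc a b)

/-- The point of the line `y = m x + c` with abscissa `t`. -/
def segPt (m c t : ℝ) : E2 := cpt t (m * t + c)

/-! ### Auxiliary material -/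

set_option maxHeartbeats 1000000

namespace ChordTwo

/-- The chord measure. -/
def Pm : Measure E2 :=
  Measure.map (fun x : ℝ => cpt x (-(1/2)))
    (uniformIccM (-(Real.sqrt 3 / 2)) (Real.sqrt 3 / 2))

/-! #### Algebraic key inequality -/

lemma step1 (d c u e r3 r7 : ℝ) (hr3 : r3^2=3) (hr7 : r7^2=7) (hr3p : 0 ≤ r3) (hr7p : 0 ≤ r7)
    (hd : 0 < d) (hc : c^2 ≤ 3*d^2)
    (hsum : d^2+e^2+c^2+u^2 = 4) (hde : d*e + c*u = 0) :
    3*d^2 + c^2 ≤ 2*r3*r7*d := by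
  have hkey : (d^2+u^2)*(d^2+c^2) = 4*d^2 := by linear_combination d^2*hsum + (c*u - d*e)*hde
  have h21 : (r3*r7)^2 = 21 := by rw [mul_pow, hr3, hr7]; norm_num
  have h21p : 0 ≤ r3*r7 := mul_nonneg hr3p hr7p
  rcases le_total (d^2) (7/3) with h | h
  · nlinarith [mul_pos hd hd, sq_nonneg (r3*r7 - 3*d), mul_nonneg h21p hd.le]
  · have hc4 : d^2 + c^2 ≤ 4 := by nlinarith [sq_nonneg u, sq_nonneg c, mul_pos hd hd]
    have : (d^2+2)^2 ≤ (r3*r7*d)^2 := by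
      nlinarith [mul_nonneg (by nlinarith : (0:ℝ) ≤ d^2 - 7/3) (by nlinarith : (0:ℝ) ≤ 4 - d^2)]
    nlinarith [this, mul_nonneg h21p hd.le, sq_nonneg (r3*r7*d - d^2 - 2)]

lemma step2 (d c r3 r7 : ℝ) (hr3 : r3^2=3) (hr7 : r7^2=7)
    (hd : 0 < d) (hc : c^2 ≤ 3*d^2) :
    48*d^4 ≤ (2*r3*r7*d - 3*d^2 - c^2)^2*(d^2+c^2) + 12*d^4*(d^2+c^2) := by
  have h21 : (r3*r7)^2 = 21 := by rw [mul_pow, hr3, hr7]; norm_num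
  have hB : (0:ℝ) < c^6 + 7*c^4*d^2 + 27*c^2*d^4 + 21*d^6 := by positivity
  have hpos : (0:ℝ) ≤ 192*d^4*c^2*(c^2+d^2)*(15*d^2 - c^2) := by
    have h15 : (0:ℝ) ≤ 15*d^2 - c^2 := by nlinarith
    positivity
  have hid : 4*(c^6 + 7*c^4*d^2 + 27*c^2*d^4 + 21*d^6)
      *((2*r3*r7*d - 3*d^2 - c^2)^2*(d^2+c^2) + 12*d^4*(d^2+c^2) - 48*d^4)
      = (2*(c^6 + 7*c^4*d^2 + 27*c^2*d^4 + 21*d^6) - 4*(r3*r7)*(c^4+4*c^2*d^2+3*d^4)*d)^2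
        + 192*d^4*c^2*(c^2+d^2)*(15*d^2 - c^2) := by
    linear_combination (192*d^6*(c^2+d^2)^2) * h21
  nlinarith [hid, hB, hpos,
    sq_nonneg (2*(c^6 + 7*c^4*d^2 + 27*c^2*d^4 + 21*d^6) - 4*(r3*r7)*(c^4+4*c^2*d^2+3*d^4)*d)]

lemma step3 (d c u e r3 r7 : ℝ) (hr3 : r3^2=3) (hr7 : r7^2=7) (hr3p : 0 ≤ r3) (hr7p : 0 ≤ r7)
    (hd : 0 < d) (hc : c^2 ≤ 3*d^2)
    (hsum : d^2+e^2+c^2+u^2 = 4) (hde : d*e + c*u = 0) :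
    3*d^2 + c^2 ≤ 2*r3*d*(u+r7) := by
  have hkey : (d^2+u^2)*(d^2+c^2) = 4*d^2 := by linear_combination d^2*hsum + (c*u - d*e)*hde
  have hA := step1 d c u e r3 r7 hr3 hr7 hr3p hr7p hd hc hsum hde
  have hF := step2 d c r3 r7 hr3 hr7 hd hc
  have hdc : (0:ℝ) < d^2 + c^2 := by positivity
  have hA2 : 12*d^2*u^2 ≤ (2*r3*r7*d - 3*d^2 - c^2)^2 := by
    have h12 : 12*d^2*u^2*(d^2+c^2) = 48*d^4 - 12*d^4*(d^2+c^2) := by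
      linear_combination 12*d^2*hkey
    nlinarith [hF, h12, hdc]
  nlinarith [hA, hA2, hr3, sq_nonneg (2*r3*r7*d - 3*d^2 - c^2 + 2*r3*d*u)]

lemma key_ineq (a1 b1 a2 b2 : ℝ) (h1 : a1^2+b1^2=1) (h2 : a2^2+b2^2=1)
    (hd : 0 < a1 - a2) (hc : (b1-b2)^2 ≤ 3*(a1-a2)^2) :
    3*(a1-a2)^2 + (b1-b2)^2 ≤ 2*Real.sqrt 3*(a1-a2)*(b1+b2+Real.sqrt 7) := by
  have hsum : (a1-a2)^2+(a1+a2)^2+(b1-b2)^2+(b1+b2)^2 = 4 := by linear_combination 2*h1+2*h2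
  have hde : (a1-a2)*(a1+a2) + (b1-b2)*(b1+b2) = 0 := by linear_combination h1 - h2
  have := step3 (a1-a2) (b1-b2) (b1+b2) (a1+a2) (Real.sqrt 3) (Real.sqrt 7)
    (Real.sq_sqrt (by norm_num)) (Real.sq_sqrt (by norm_num))
    (Real.sqrt_nonneg 3) (Real.sqrt_nonneg 7) hd hc hsum hde
  linarith [this]

/-! #### Plane geometry lemmas -/

lemma cpt_eta (p : E2) : p = cpt (p 0) (p 1) := by
  ext i; fin_cases i <;> rfl

lemma cpt_zero (a b : ℝ) : cpt a b 0 = a := by simp [cpt]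
lemma cpt_one (a b : ℝ) : cpt a b 1 = b := by simp [cpt]

lemma dist_sq_cpt (x y a b : ℝ) : dist (cpt x y) (cpt a b) ^ 2 = (x-a)^2 + (y-b)^2 := by
  rw [EuclideanSpace.dist_eq, Real.sq_sqrt (by positivity)]
  simp [Fin.sum_univ_two, cpt, Real.dist_eq, sq_abs]

lemma sphere_coords (p : E2) (hp : p ∈ Metric.sphere (0 : E2) 1) :
    (p 0)^2 + (p 1)^2 = 1 := by
  have h : dist p 0 = 1 := hp
  have h2 : dist p 0 ^ 2 = 1 := by rw [h]; norm_num
  rw [EuclideanSpace.dist_eq, Real.sq_sqrt (by positivity)] at h2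
  simpa [Fin.sum_univ_two, Real.dist_eq, sq_abs] using h2

lemma cpt_mem_sphere (a b : ℝ) (h : a^2 + b^2 = 1) :
    cpt a b ∈ Metric.sphere (0 : E2) 1 := by
  rw [mem_sphere_zero_iff_norm, EuclideanSpace.norm_eq]
  have : ∑ i, ‖cpt a b i‖ ^ 2 = a^2 + b^2 := by
    simp [Fin.sum_univ_two, cpt, Real.norm_eq_abs, sq_abs]
  rw [this, h, Real.sqrt_one]

lemma meas_chord : Measurable (fun x : ℝ => cpt x (-(1/2))) := by
  unfold cpt
  refine (WithLp.measurable_toLp 2 _).comp ?_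
  apply measurable_pi_lambda
  intro i; fin_cases i
  · exact measurable_id
  · exact measurable_const

lemma cont_dist_sq (p : E2) : Continuous (fun x : E2 => dist x p ^ 2) :=
  (continuous_id.dist continuous_const).pow 2

lemma iInf_pair' (p q x : E2) :
    (⨅ a : ({p, q} : Set E2), dist x (a : E2) ^ 2) = min (dist x p ^ 2) (dist x q ^ 2) := by
  have hbdd : BddBelow (Set.range fun a : ({p, q} : Set E2) => dist x (a : E2) ^ 2) :=
    ⟨0, by rintro _ ⟨a, rfl⟩; positivity⟩
  apply le_antisymm
  · exact le_min (ciInf_le hbdd ⟨p, by simp⟩) (ciInf_le hbdd ⟨q, by simp⟩)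
  · apply le_ciInf
    rintro ⟨a, ha⟩
    rcases ha with rfl | rfl
    · exact min_le_left _ _
    · exact min_le_right _ _

lemma iInf_single' (p x : E2) :
    (⨅ a : ({p} : Set E2), dist x (a : E2) ^ 2) = dist x p ^ 2 := by
  rw [ciInf_unique]; rfl

/-! #### Integral lemmas -/

lemma uniform_integral (f : ℝ → ℝ) :
    ∫ t, f t ∂(uniformIccM (-(Real.sqrt 3 / 2)) (Real.sqrt 3 / 2))
      = (Real.sqrt 3)⁻¹ * ∫ t in (-(Real.sqrt 3 / 2))..(Real.sqrt 3 / 2), f t := by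
  have h3 : (0:ℝ) < Real.sqrt 3 := by positivity
  unfold uniformIccM
  rw [MeasureTheory.integral_smul_measure]
  have he : (Real.sqrt 3 / 2 - -(Real.sqrt 3 / 2)) = Real.sqrt 3 := by ring
  rw [he, ENNReal.toReal_inv, ENNReal.toReal_ofReal h3.le]
  rw [intervalIntegral.integral_of_le (by linarith), ← MeasureTheory.integral_Icc_eq_integral_Ioc]
  simp [smul_eq_mul]

lemma integ_quad (l r a k : ℝ) :
    ∫ x in l..r, ((x - a)^2 + k) = ((r-a)^3 - (l-a)^3)/3 + k*(r-l) := by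
  have hderiv : ∀ x ∈ Set.uIcc l r,
      HasDerivAt (fun x : ℝ => (x-a)^3/3 + k*x) ((x-a)^2 + k) x := by
    intro x _
    have h1 : HasDerivAt (fun x : ℝ => (x-a)^3/3) ((x-a)^2) x := by
      have := (((hasDerivAt_id x).sub_const a).pow 3).div_const 3
      exact this.congr_deriv (by simp only [id_eq]; push_cast; ring)
    have h2 : HasDerivAt (fun x : ℝ => k*x) k x := by
      simpa using (hasDerivAt_id x).const_mul k
    exact h1.add h2
  rw [intervalIntegral.integral_eq_sub_of_hasDerivAt hderiv
    (Continuous.intervalIntegrable (by continuity) _ _)]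
  ring

lemma cDist_pair (a1 b1 a2 b2 : ℝ) :
    cDistortion Pm {cpt a1 b1, cpt a2 b2}
      = (Real.sqrt 3)⁻¹ * ∫ x in (-(Real.sqrt 3/2))..(Real.sqrt 3/2),
          min ((x-a1)^2 + (-(1/2)-b1)^2) ((x-a2)^2 + (-(1/2)-b2)^2) := by
  unfold cDistortion Pm
  have h4 : (fun x : E2 => ⨅ a : ({cpt a1 b1, cpt a2 b2} : Set E2), dist x (a : E2) ^ 2)
      = fun x => min (dist x (cpt a1 b1) ^ 2) (dist x (cpt a2 b2) ^ 2) :=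
    funext (iInf_pair' _ _)
  rw [h4, MeasureTheory.integral_map meas_chord.aemeasurable
    (((cont_dist_sq (cpt a1 b1)).min (cont_dist_sq (cpt a2 b2))).aestronglyMeasurable)]
  simp only [dist_sq_cpt]
  exact uniform_integral _

lemma cDist_single (a b : ℝ) :
    cDistortion Pm {cpt a b}
      = (Real.sqrt 3)⁻¹ * ∫ x in (-(Real.sqrt 3/2))..(Real.sqrt 3/2),
          ((x-a)^2 + (-(1/2)-b)^2) := by
  unfold cDistortion Pm
  have h4 : (fun x : E2 => ⨅ p : ({cpt a b} : Set E2), dist x (p : E2) ^ 2)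
      = fun x => dist x (cpt a b) ^ 2 :=
    funext (iInf_single' _)
  rw [h4, MeasureTheory.integral_map meas_chord.aemeasurable
    ((cont_dist_sq (cpt a b)).aestronglyMeasurable)]
  simp only [dist_sq_cpt]
  exact uniform_integral _

lemma pair_integral (a1 b1 a2 b2 : ℝ) (h1 : a1^2+b1^2 = 1) (h2 : a2^2+b2^2 = 1)
    (hd : 0 < a1 - a2) (hc : (b1-b2)^2 ≤ 3*(a1-a2)^2) :
    ∫ x in (-(Real.sqrt 3/2))..(Real.sqrt 3/2),
        min ((x-a1)^2 + (-(1/2)-b1)^2) ((x-a2)^2 + (-(1/2)-b2)^2)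
      = Real.sqrt 3/4 + (5/2 + b1 + b2) * (Real.sqrt 3/2) - (a1-a2) * (3/4)
        - (b1-b2)^2/(4*(a1-a2)) := by
  have hr3 : (Real.sqrt 3)^2 = 3 := Real.sq_sqrt (by norm_num)
  have hr3p : (0:ℝ) < Real.sqrt 3 := by positivity
  have h3d : (Real.sqrt 3*(a1-a2))^2 = 3*(a1-a2)^2 := by rw [mul_pow, hr3]
  have hw : 0 < Real.sqrt 3 * (a1-a2) := by positivity
  have hcle : b1 - b2 ≤ Real.sqrt 3 * (a1 - a2) := by
    nlinarith [hc, h3d, hw, sq_nonneg (b1-b2 - Real.sqrt 3*(a1-a2))]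
  have hcge : -(Real.sqrt 3 * (a1 - a2)) ≤ b1 - b2 := by
    nlinarith [hc, h3d, hw, sq_nonneg (b1-b2 + Real.sqrt 3*(a1-a2))]
  obtain ⟨m, hm'⟩ : ∃ m, 2*(a1-a2)*m = b1-b2 :=
    ⟨(b1-b2)/(2*(a1-a2)), by field_simp⟩
  have hdpos : (0:ℝ) < 2*(a1-a2) := by linarith
  have hm2 : m ≤ Real.sqrt 3/2 := by nlinarith [hm', hcle, hdpos]
  have hm1 : -(Real.sqrt 3/2) ≤ m := by nlinarith [hm', hcge, hdpos]
  have hcont1 : Continuous fun x : ℝ => (x-a1)^2 + (-(1/2)-b1)^2 := by continuity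
  have hcont2 : Continuous fun x : ℝ => (x-a2)^2 + (-(1/2)-b2)^2 := by continuity
  have hcont : Continuous fun x : ℝ =>
      min ((x-a1)^2 + (-(1/2)-b1)^2) ((x-a2)^2 + (-(1/2)-b2)^2) := hcont1.min hcont2
  rw [← intervalIntegral.integral_add_adjacent_intervals (b := m)
      (hcont.intervalIntegrable _ _) (hcont.intervalIntegrable _ _)]
  have e1 : ∫ x in (-(Real.sqrt 3/2))..m,
        min ((x-a1)^2 + (-(1/2)-b1)^2) ((x-a2)^2 + (-(1/2)-b2)^2)
      = ∫ x in (-(Real.sqrt 3/2))..m, ((x-a2)^2 + (-(1/2)-b2)^2) := by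
    apply intervalIntegral.integral_congr
    intro x hx
    rw [Set.uIcc_of_le hm1] at hx
    apply min_eq_right
    have h2d : 2*(a1-a2)*x ≤ b1 - b2 := by nlinarith [hx.2, hdpos, hm']
    nlinarith [h2d, h1, h2]
  have e2 : ∫ x in m..(Real.sqrt 3/2),
        min ((x-a1)^2 + (-(1/2)-b1)^2) ((x-a2)^2 + (-(1/2)-b2)^2)
      = ∫ x in m..(Real.sqrt 3/2), ((x-a1)^2 + (-(1/2)-b1)^2) := by
    apply intervalIntegral.integral_congr
    intro x hx
    rw [Set.uIcc_of_le hm2] at hx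
    apply min_eq_left
    have h2d : b1 - b2 ≤ 2*(a1-a2)*x := by nlinarith [hx.1, hdpos, hm']
    nlinarith [h2d, h1, h2]
  rw [e1, e2, integ_quad, integ_quad]
  have hrw : (b1-b2)^2/(4*(a1-a2)) = (a1-a2)*m^2 := by
    rw [eq_comm, eq_div_iff (by positivity)]
    linear_combination (b1 - b2 + 2*(a1-a2)*m) * hm'
  rw [hrw]
  have hs2 : (Real.sqrt 3/2)^2 = 3/4 := by rw [div_pow, hr3]; norm_num
  linear_combination (Real.sqrt 3/2 - m)*h1 + (m + Real.sqrt 3/2)*h2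
    + (2*(Real.sqrt 3/2)/3 + a2 - a1)*hs2 + m*hm'

/-! #### Lower bounds -/

lemma sqrt7_ge_two : (2:ℝ) ≤ Real.sqrt 7 := by
  nlinarith [Real.sq_sqrt (by norm_num : (7:ℝ) ≥ 0), Real.sqrt_nonneg 7]

lemma val_single_lower (a b : ℝ) (h : a^2 + b^2 = 1) :
    (3 - Real.sqrt 7)/2 ≤ (Real.sqrt 3)⁻¹ *
      (((Real.sqrt 3/2 - a)^3 - (-(Real.sqrt 3/2) - a)^3)/3
        + (-(1/2)-b)^2 * (Real.sqrt 3/2 - -(Real.sqrt 3/2))) := by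
  have hr3 : (Real.sqrt 3)^2 = 3 := Real.sq_sqrt (by norm_num)
  have hr3p : (0:ℝ) < Real.sqrt 3 := by positivity
  have hval : ((Real.sqrt 3/2 - a)^3 - (-(Real.sqrt 3/2) - a)^3)/3
      + (-(1/2)-b)^2 * (Real.sqrt 3/2 - -(Real.sqrt 3/2))
      = Real.sqrt 3 * (3/2 + b) := by
    linear_combination (Real.sqrt 3/12)*hr3 + Real.sqrt 3 * h
  rw [hval, inv_mul_cancel_left₀ (ne_of_gt hr3p)]
  have hb : -1 ≤ b := by nlinarith [sq_nonneg a, sq_nonneg (b+1)]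
  linarith [sqrt7_ge_two]

lemma single_lower (a b : ℝ) (h : a^2 + b^2 = 1) :
    (3 - Real.sqrt 7)/2 ≤ cDistortion Pm {cpt a b} := by
  rw [cDist_single, integ_quad]
  exact val_single_lower a b h

/-- Case where the second point is closest on the whole chord. -/
lemma pair_lower_right (a1 b1 a2 b2 : ℝ) (h2 : a2^2+b2^2 = 1)
    (hmin : ∀ x ∈ Set.Icc (-(Real.sqrt 3/2)) (Real.sqrt 3/2),
      (x-a2)^2 + (-(1/2)-b2)^2 ≤ (x-a1)^2 + (-(1/2)-b1)^2) :
    (3 - Real.sqrt 7)/2 ≤ cDistortion Pm {cpt a1 b1, cpt a2 b2} := by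
  have hr3p : (0:ℝ) < Real.sqrt 3 := by positivity
  rw [cDist_pair]
  have e : ∫ x in (-(Real.sqrt 3/2))..(Real.sqrt 3/2),
        min ((x-a1)^2 + (-(1/2)-b1)^2) ((x-a2)^2 + (-(1/2)-b2)^2)
      = ∫ x in (-(Real.sqrt 3/2))..(Real.sqrt 3/2), ((x-a2)^2 + (-(1/2)-b2)^2) := by
    apply intervalIntegral.integral_congr
    intro x hx
    rw [Set.uIcc_of_le (by linarith)] at hx
    exact min_eq_right (hmin x hx)
  rw [e, integ_quad]
  exact val_single_lower a2 b2 h2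

/-- Case of a genuine crossing with `a2 < a1`. -/
lemma pair_lower_cross (a1 b1 a2 b2 : ℝ) (h1 : a1^2+b1^2 = 1) (h2 : a2^2+b2^2 = 1)
    (hd : 0 < a1 - a2) (hc : (b1-b2)^2 ≤ 3*(a1-a2)^2) :
    (3 - Real.sqrt 7)/2 ≤ cDistortion Pm {cpt a1 b1, cpt a2 b2} := by
  have hr3 : (Real.sqrt 3)^2 = 3 := Real.sq_sqrt (by norm_num)
  have hr3p : (0:ℝ) < Real.sqrt 3 := by positivity
  rw [cDist_pair, pair_integral a1 b1 a2 b2 h1 h2 hd hc]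
  have hkey := key_ineq a1 b1 a2 b2 h1 h2 hd hc
  have hdiv : (b1-b2)^2/(4*(a1-a2))
      ≤ (2*Real.sqrt 3*(b1+b2+Real.sqrt 7) - 3*(a1-a2))/4 := by
    rw [div_le_div_iff₀ (by linarith) (by norm_num)]
    nlinarith [hkey]
  rw [le_inv_mul_iff₀ hr3p]
  linarith [hdiv]

/-- Full lower bound for a pair of points on the unit circle. -/
lemma pair_lower (a1 b1 a2 b2 : ℝ) (h1 : a1^2+b1^2 = 1) (h2 : a2^2+b2^2 = 1) :
    (3 - Real.sqrt 7)/2 ≤ cDistortion Pm {cpt a1 b1, cpt a2 b2} := by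
  have hr3 : (Real.sqrt 3)^2 = 3 := Real.sq_sqrt (by norm_num)
  have hs2 : (Real.sqrt 3/2)^2 = 3/4 := by rw [div_pow, hr3]; norm_num
  rcases le_or_gt ((b1-b2)^2) (3*(a1-a2)^2) with hc | hc
  · rcases lt_trichotomy a2 a1 with hlt | heq | hgt
    · exact pair_lower_cross a1 b1 a2 b2 h1 h2 (by linarith) hc
    · -- a1 = a2 forces b1 = b2
      have hb : b1 = b2 := by nlinarith [hc, sq_nonneg (b1-b2)]
      have : cpt a2 b2 = cpt a1 b1 := by rw [heq, hb]
      rw [this, Set.pair_eq_singleton]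
      exact single_lower a1 b1 h1
    · rw [Set.pair_comm]
      exact pair_lower_cross a2 b2 a1 b1 h2 h1 (by linarith) (by nlinarith [hc])
  · -- no crossing inside the chord: one point is closest throughout
    rcases le_or_gt b2 b1 with hb | hb
    · -- b1 - b2 ≥ 0 : the second point is always closest
      apply pair_lower_right a1 b1 a2 b2 h2
      intro x hx
      have hxx : x^2 ≤ 3/4 := by
        rcases hx with ⟨hx1, hx2⟩
        nlinarith [hs2]
      have hsq : (2*(a1-a2)*x)^2 ≤ (b1-b2)^2 := by nlinarith [hxx, hc.le]
      have hle : 2*(a1-a2)*x ≤ b1-b2 := by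
        nlinarith [hsq, hb, sq_nonneg (2*(a1-a2)*x - (b1-b2))]
      nlinarith [hle, h1, h2]
    · rw [Set.pair_comm]
      apply pair_lower_right a2 b2 a1 b1 h1
      intro x hx
      have hxx : x^2 ≤ 3/4 := by
        rcases hx with ⟨hx1, hx2⟩
        nlinarith [hs2]
      have hsq : (2*(a2-a1)*x)^2 ≤ (b2-b1)^2 := by nlinarith [hxx, hc.le]
      have hle : 2*(a2-a1)*x ≤ b2-b1 := by
        nlinarith [hsq, hb, sq_nonneg (2*(a2-a1)*x - (b2-b1))]
      nlinarith [hle, h1, h2]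

end ChordTwo

namespace ChordTwo

lemma t_sq : (Real.sqrt 3/2 + Real.sqrt 7/2)^2 = 5/2 + Real.sqrt 3 * Real.sqrt 7/2 := by
  have hr3 : (Real.sqrt 3)^2 = 3 := Real.sq_sqrt (by norm_num)
  have hr7 : (Real.sqrt 7)^2 = 7 := Real.sq_sqrt (by norm_num)
  linear_combination (1/4)*hr3 + (1/4)*hr7

lemma g_sq : (Real.sqrt 3 * Real.sqrt 7)^2 = 21 := by
  have hr3 : (Real.sqrt 3)^2 = 3 := Real.sq_sqrt (by norm_num)
  have hr7 : (Real.sqrt 7)^2 = 7 := Real.sq_sqrt (by norm_num)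
  rw [mul_pow, hr3, hr7]; norm_num

lemma cos_theta : Real.cos (2 * Real.arctan (Real.sqrt 3/2 + Real.sqrt 7/2))
    = -(Real.sqrt 3 * Real.sqrt 7/7) := by
  set t : ℝ := Real.sqrt 3/2 + Real.sqrt 7/2 with ht
  have h1t : (0:ℝ) < 1 + t^2 := by positivity
  have hs : (Real.sqrt (1 + t^2))^2 = 1 + t^2 := Real.sq_sqrt h1t.le
  rw [Real.cos_two_mul, Real.cos_arctan, div_pow, one_pow, hs]
  have hgpos : (0:ℝ) ≤ Real.sqrt 3 * Real.sqrt 7 := by positivity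
  have ht2 : 1 + t^2 = 7/2 + Real.sqrt 3 * Real.sqrt 7/2 := by
    have := t_sq; rw [← ht] at this; linarith
  rw [ht2]
  have hne : (7:ℝ)/2 + Real.sqrt 3 * Real.sqrt 7/2 ≠ 0 := by positivity
  field_simp
  linear_combination g_sq

lemma sin_theta : Real.sin (2 * Real.arctan (Real.sqrt 3/2 + Real.sqrt 7/2))
    = 2*Real.sqrt 7/7 := by
  set t : ℝ := Real.sqrt 3/2 + Real.sqrt 7/2 with ht
  have h1t : (0:ℝ) < 1 + t^2 := by positivity
  have hs : (Real.sqrt (1 + t^2))^2 = 1 + t^2 := Real.sq_sqrt h1t.le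
  have hsp : (0:ℝ) < Real.sqrt (1 + t^2) := Real.sqrt_pos.mpr h1t
  rw [Real.sin_two_mul, Real.sin_arctan, Real.cos_arctan]
  have hr7 : (Real.sqrt 7)^2 = 7 := Real.sq_sqrt (by norm_num)
  have hr3 : (Real.sqrt 3)^2 = 3 := Real.sq_sqrt (by norm_num)
  have ht2 : 1 + t^2 = 7/2 + Real.sqrt 3 * Real.sqrt 7/2 := by
    have := t_sq; rw [← ht] at this; linarith
  have key : 2 * (t / Real.sqrt (1+t^2)) * (1 / Real.sqrt (1+t^2)) = 2*t/(1+t^2) := by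
    field_simp
    rw [hs]
  rw [key, ht2, ht]
  have hne : (7:ℝ)/2 + Real.sqrt 3 * Real.sqrt 7/2 ≠ 0 := by positivity
  field_simp
  linear_combination (-1:ℝ) * Real.sqrt 3 * hr7

end ChordTwo

namespace ChordTwo

lemma on_sphere_1 : (Real.sqrt 3 * Real.sqrt 7/7)^2 + (-(2*Real.sqrt 7/7))^2 = 1 := by
  have hr7 : (Real.sqrt 7)^2 = 7 := Real.sq_sqrt (by norm_num)
  linear_combination (1/49)*g_sq + (4/49)*hr7

lemma on_sphere_2 : (-(Real.sqrt 3 * Real.sqrt 7/7))^2 + (-(2*Real.sqrt 7/7))^2 = 1 := by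
  have hr7 : (Real.sqrt 7)^2 = 7 := Real.sq_sqrt (by norm_num)
  linear_combination (1/49)*g_sq + (4/49)*hr7

lemma pair_value :
    cDistortion Pm {cpt (-(Real.sqrt 3 * Real.sqrt 7/7)) (-(2*Real.sqrt 7/7)),
      cpt (Real.sqrt 3 * Real.sqrt 7/7) (-(2*Real.sqrt 7/7))} = (3 - Real.sqrt 7)/2 := by
  have hr3p : (0:ℝ) < Real.sqrt 3 := by positivity
  have hg : (0:ℝ) < Real.sqrt 3 * Real.sqrt 7 := by positivity
  rw [Set.pair_comm, cDist_pair,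
    pair_integral _ _ _ _ on_sphere_1 on_sphere_2 (by linarith)
      (by nlinarith [sq_nonneg (Real.sqrt 3 * Real.sqrt 7/7 - -(Real.sqrt 3 * Real.sqrt 7/7))])]
  have hE : Real.sqrt 3/4 + (5/2 + -(2*Real.sqrt 7/7) + -(2*Real.sqrt 7/7)) * (Real.sqrt 3/2)
      - (Real.sqrt 3 * Real.sqrt 7/7 - -(Real.sqrt 3 * Real.sqrt 7/7)) * (3/4)
      - (-(2*Real.sqrt 7/7) - -(2*Real.sqrt 7/7))^2
          /(4*(Real.sqrt 3 * Real.sqrt 7/7 - -(Real.sqrt 3 * Real.sqrt 7/7)))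
      = Real.sqrt 3 * ((3 - Real.sqrt 7)/2) := by
    ring
  rw [hE, inv_mul_cancel_left₀ (ne_of_gt hr3p)]

end ChordTwo

open ChordTwo in
/-- For the uniform distribution on the chord `{(x, -1/2) : -√3/2 ≤ x ≤ √3/2}` of the unit
circle, with constraint the unit circle: the set `{(cos θ₁, sin θ₁), (cos θ₂, sin θ₂)}` with
`θ₁ = 2π - 2 arctan(√3/2 + √7/2)` and `θ₂ = π + 2 arctan(√3/2 + √7/2)` is an optimal set of two
points, and the second constrained quantization error is `V₂ = (3 - √7)/2`. -/
theorem chord_circle_constraint_two_points :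
    IsOptimalNSet
      (Measure.map (fun x : ℝ => cpt x (-(1/2)))
        (uniformIccM (-(Real.sqrt 3 / 2)) (Real.sqrt 3 / 2)))
      (Metric.sphere (0 : E2) 1) 2
      {cpt (Real.cos (2 * π - 2 * Real.arctan (Real.sqrt 3 / 2 + Real.sqrt 7 / 2)))
          (Real.sin (2 * π - 2 * Real.arctan (Real.sqrt 3 / 2 + Real.sqrt 7 / 2))),
        cpt (Real.cos (π + 2 * Real.arctan (Real.sqrt 3 / 2 + Real.sqrt 7 / 2)))
          (Real.sin (π + 2 * Real.arctan (Real.sqrt 3 / 2 + Real.sqrt 7 / 2)))} ∧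
    cqError
      (Measure.map (fun x : ℝ => cpt x (-(1/2)))
        (uniformIccM (-(Real.sqrt 3 / 2)) (Real.sqrt 3 / 2)))
      (Metric.sphere (0 : E2) 1) 2 = (3 - Real.sqrt 7) / 2 := by
  have hP : Measure.map (fun x : ℝ => cpt x (-(1/2)))
      (uniformIccM (-(Real.sqrt 3 / 2)) (Real.sqrt 3 / 2)) = Pm := rfl
  have hg : (0:ℝ) < Real.sqrt 3 * Real.sqrt 7 := by positivity
  have hcos1 : Real.cos (2 * π - 2 * Real.arctan (Real.sqrt 3 / 2 + Real.sqrt 7 / 2))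
      = -(Real.sqrt 3 * Real.sqrt 7/7) := by
    rw [Real.cos_two_pi_sub, cos_theta]
  have hsin1 : Real.sin (2 * π - 2 * Real.arctan (Real.sqrt 3 / 2 + Real.sqrt 7 / 2))
      = -(2*Real.sqrt 7/7) := by
    rw [Real.sin_two_pi_sub, sin_theta]
  have hcos2 : Real.cos (π + 2 * Real.arctan (Real.sqrt 3 / 2 + Real.sqrt 7 / 2))
      = Real.sqrt 3 * Real.sqrt 7/7 := by
    rw [Real.cos_add, Real.cos_pi, Real.sin_pi, cos_theta, sin_theta]; ring
  have hsin2 : Real.sin (π + 2 * Real.arctan (Real.sqrt 3 / 2 + Real.sqrt 7 / 2))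
      = -(2*Real.sqrt 7/7) := by
    rw [Real.sin_add, Real.cos_pi, Real.sin_pi, sin_theta]; ring
  rw [hP, hcos1, hsin1, hcos2, hsin2]
  set p1 : E2 := cpt (-(Real.sqrt 3 * Real.sqrt 7/7)) (-(2*Real.sqrt 7/7)) with hp1
  set p2 : E2 := cpt (Real.sqrt 3 * Real.sqrt 7/7) (-(2*Real.sqrt 7/7)) with hp2
  have hne : p1 ≠ p2 := by
    intro h
    have h0 : (-(Real.sqrt 3 * Real.sqrt 7/7)) = Real.sqrt 3 * Real.sqrt 7/7 := by
      simpa [hp1, hp2, cpt] using congrArg (fun p : E2 => p 0) h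
    linarith
  have hsub : ({p1, p2} : Set E2) ⊆ Metric.sphere (0 : E2) 1 := by
    rintro x (rfl | rfl)
    · exact cpt_mem_sphere _ _ on_sphere_2
    · exact cpt_mem_sphere _ _ on_sphere_1
  have hfin : ({p1, p2} : Set E2).Finite := Set.toFinite _
  have hcard : ({p1, p2} : Set E2).ncard = 2 := Set.ncard_pair hne
  have hval : cDistortion Pm {p1, p2} = (3 - Real.sqrt 7)/2 := pair_value
  have hmem : (3 - Real.sqrt 7)/2 ∈ {v : ℝ | ∃ α : Set E2,
      α ⊆ Metric.sphere (0 : E2) 1 ∧ α.Finite ∧ 1 ≤ α.ncard ∧ α.ncard ≤ 2 ∧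
      v = cDistortion Pm α} :=
    ⟨{p1, p2}, hsub, hfin, by omega, by omega, hval.symm⟩
  have hlb : ∀ v ∈ {v : ℝ | ∃ α : Set E2,
      α ⊆ Metric.sphere (0 : E2) 1 ∧ α.Finite ∧ 1 ≤ α.ncard ∧ α.ncard ≤ 2 ∧
      v = cDistortion Pm α}, (3 - Real.sqrt 7)/2 ≤ v := by
    rintro v ⟨α, hαS, hαfin, h1c, h2c, rfl⟩
    have hcases : α.ncard = 1 ∨ α.ncard = 2 := by omega
    rcases hcases with h | h
    · obtain ⟨p, rfl⟩ := Set.ncard_eq_one.mp h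
      have hp := sphere_coords p (hαS (Set.mem_singleton _))
      have hle := single_lower (p 0) (p 1) hp
      rwa [← cpt_eta p] at hle
    · obtain ⟨p, q, hpq, rfl⟩ := Set.ncard_eq_two.mp h
      have hp := sphere_coords p (hαS (by simp))
      have hq := sphere_coords q (hαS (by simp))
      have hle := pair_lower (p 0) (p 1) (q 0) (q 1) hp hq
      rwa [← cpt_eta p, ← cpt_eta q] at hle
  have hCq : cqError Pm (Metric.sphere (0 : E2) 1) 2 = (3 - Real.sqrt 7)/2 := by
    unfold cqError
    exact le_antisymm (csInf_le ⟨(3 - Real.sqrt 7)/2, fun v hv => hlb v hv⟩ hmem)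
      (le_csInf ⟨_, hmem⟩ hlb)
  exact ⟨⟨hsub, hfin, by omega, by omega, by rw [hval, hCq]⟩, by rw [hCq]⟩
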